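/- Let φ ∈ S(ℝ) be nonzero with H₀φ = λφ for some λ ∈ ℂ, where H₀ = −d²/dx² + x², and let θ ∈ S(ℝ) be nonzero. Then the function F(x, y) = W(φ, θ)(x/2, y/2) belongs to S(ℝ²), is nonzero, and is an eigenfunction of the Landau Hamiltonian: H̃_L F = λ F, where H̃_L = −(∂_x² + ∂_y²) + i(x∂_y − y∂_x) + (1/4)(x² + y²). -/

import Mathlib

open MeasureTheory Complex
open scoped ComplexConjugate Real

noncomputable section

/-- The cross-Wigner transform (one dimension):
`W(φ,ψ)(x,ξ) = (2π)⁻¹ ∫ e^{-iξt} φ(x+t/2) conj(ψ(x−t/2)) dt`. -/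
def crossWigner1 (φ ψ : ℝ → ℂ) (x ξ : ℝ) : ℂ :=
  ((2 * π)⁻¹ : ℝ) *
    ∫ t : ℝ, Complex.exp (-(Complex.I * ξ * t)) * φ (x + t / 2) * conj (ψ (x - t / 2))

/-- Partial derivative in the first variable. -/
def pdx (f : ℝ → ℝ → ℂ) (x y : ℝ) : ℂ := deriv (fun u => f u y) x

/-- Partial derivative in the second variable. -/
def pdy (f : ℝ → ℝ → ℂ) (x y : ℝ) : ℂ := deriv (fun v => f x v) y

/-- The Landau Hamiltonian
`H̃_L F = −(∂ₓ²F + ∂ᵧ²F) + i(x ∂ᵧF − y ∂ₓF) + (1/4)(x² + y²)F`. -/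
def landauOp (f : ℝ → ℝ → ℂ) (x y : ℝ) : ℂ :=
  -(pdx (pdx f) x y + pdy (pdy f) x y)
    + Complex.I * (x * pdy f x y - y * pdx f x y)
    + (((x ^ 2 + y ^ 2) / 4 : ℝ) : ℂ) * f x y

/-- The harmonic oscillator Hamiltonian `H₀φ = −φ'' + x²φ`. -/
def harmOsc (φ : ℝ → ℂ) (x : ℝ) : ℂ := -deriv (deriv φ) x + (x : ℂ) ^ 2 * φ x


namespace Wig

open SchwartzMap Real FourierTransform ContinuousLinearMap Finset

abbrev S1 := SchwartzMap ℝ ℂ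
abbrev S2 := SchwartzMap (ℝ × ℝ) ℂ

lemma contDiff_comp_clm (f : S1) (A : (ℝ × ℝ) →L[ℝ] ℝ) :
    ContDiff ℝ ((⊤ : ℕ∞) : WithTop ℕ∞) (fun w : ℝ × ℝ => f (A w)) :=
  (f.smooth ⊤).comp A.contDiff

lemma norm_iFD_comp_le (f : S1) (A : (ℝ × ℝ) →L[ℝ] ℝ) (n : ℕ) (z : ℝ × ℝ) :
    ‖iteratedFDeriv ℝ n (fun w : ℝ × ℝ => f (A w)) z‖
      ≤ ‖iteratedFDeriv ℝ n (⇑f) (A z)‖ * ‖A‖ ^ n := by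
  have h : iteratedFDeriv ℝ n (⇑f ∘ ⇑A) z
      = (iteratedFDeriv ℝ n (⇑f) (A z)).compContinuousLinearMap fun _ => A :=
    A.iteratedFDeriv_comp_right (f.smooth ⊤) z (by exact_mod_cast le_top)
  have : (fun w : ℝ × ℝ => f (A w)) = (⇑f ∘ ⇑A) := rfl
  rw [this, h]
  calc ‖(iteratedFDeriv ℝ n (⇑f) (A z)).compContinuousLinearMap fun _ => A‖
      ≤ ‖iteratedFDeriv ℝ n (⇑f) (A z)‖ * ∏ _i : Fin n, ‖A‖ :=
        ContinuousMultilinearMap.norm_compContinuousLinearMap_le _ _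
    _ = ‖iteratedFDeriv ℝ n (⇑f) (A z)‖ * ‖A‖ ^ n := by
        rw [Finset.prod_const, Finset.card_univ, Fintype.card_fin]

/-- The Schwartz function `z ↦ f (A z) * g (B z)` for linear `A B` with
`‖z‖ ≤ |A z| + |B z|`. -/
def tensorComp (A B : (ℝ × ℝ) →L[ℝ] ℝ) (hAB : ∀ z : ℝ × ℝ, ‖z‖ ≤ |A z| + |B z|)
    (f g : S1) : S2 where
  toFun := fun z => f (A z) * g (B z)
  smooth' := by exact_mod_cast (contDiff_comp_clm f A).mul (contDiff_comp_clm g B)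
  decay' := by
    intro k n
    set Sf : ℝ := 2 ^ k * ((Finset.Iic (k, n)).sup (schwartzSeminormFamily ℝ ℝ ℂ)) f with hSf
    set Sg : ℝ := 2 ^ k * ((Finset.Iic (k, n)).sup (schwartzSeminormFamily ℝ ℝ ℂ)) g with hSg
    refine ⟨∑ i ∈ Finset.range (n + 1),
      (n.choose i : ℝ) * (Sf * ‖A‖ ^ i) * (Sg * ‖B‖ ^ (n - i)), fun z => ?_⟩
    have hfA : ∀ (i : ℕ), i ≤ n → (1 + |A z|) ^ k * ‖iteratedFDeriv ℝ i (⇑f) (A z)‖ ≤ Sf := by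
      intro i hi
      have h := one_add_le_sup_seminorm_apply (𝕜 := ℝ) (m := (k, n)) le_rfl hi f (A z)
      simp only [Real.norm_eq_abs] at h
      exact h
    have hgB : ∀ (i : ℕ), i ≤ n → (1 + |B z|) ^ k * ‖iteratedFDeriv ℝ i (⇑g) (B z)‖ ≤ Sg := by
      intro i hi
      have h := one_add_le_sup_seminorm_apply (𝕜 := ℝ) (m := (k, n)) le_rfl hi g (B z)
      simp only [Real.norm_eq_abs] at h
      exact h
    have hmul : ‖iteratedFDeriv ℝ n (fun z => f (A z) * g (B z)) z‖
        ≤ ∑ i ∈ Finset.range (n + 1), (n.choose i : ℝ)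
            * ‖iteratedFDeriv ℝ i (fun w : ℝ × ℝ => f (A w)) z‖
            * ‖iteratedFDeriv ℝ (n - i) (fun w : ℝ × ℝ => g (B w)) z‖ :=
      norm_iteratedFDeriv_mul_le (𝕜 := ℝ) (contDiff_comp_clm f A)
        (contDiff_comp_clm g B) z (by exact_mod_cast le_top)
    have hz : ‖z‖ ^ k ≤ (1 + |A z|) ^ k * (1 + |B z|) ^ k := by
      rw [← mul_pow]
      apply pow_le_pow_left₀ (norm_nonneg z)
      nlinarith [hAB z, abs_nonneg (A z), abs_nonneg (B z), mul_nonneg (abs_nonneg (A z)) (abs_nonneg (B z))]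
    calc ‖z‖ ^ k * ‖iteratedFDeriv ℝ n (fun z => f (A z) * g (B z)) z‖
        ≤ ((1 + |A z|) ^ k * (1 + |B z|) ^ k) *
          (∑ i ∈ Finset.range (n + 1), (n.choose i : ℝ)
            * ‖iteratedFDeriv ℝ i (fun w : ℝ × ℝ => f (A w)) z‖
            * ‖iteratedFDeriv ℝ (n - i) (fun w : ℝ × ℝ => g (B w)) z‖) := by
          apply mul_le_mul hz hmul (norm_nonneg _)
          positivity
      _ ≤ ∑ i ∈ Finset.range (n + 1),
          (n.choose i : ℝ) * (Sf * ‖A‖ ^ i) * (Sg * ‖B‖ ^ (n - i)) := by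
          rw [Finset.mul_sum]
          apply Finset.sum_le_sum
          intro i hi
          have hi' : i ≤ n := Nat.lt_succ_iff.mp (Finset.mem_range.mp hi)
          have h1 : ‖iteratedFDeriv ℝ i (fun w : ℝ × ℝ => f (A w)) z‖
              ≤ ‖iteratedFDeriv ℝ i (⇑f) (A z)‖ * ‖A‖ ^ i := norm_iFD_comp_le f A i z
          have h2 : ‖iteratedFDeriv ℝ (n - i) (fun w : ℝ × ℝ => g (B w)) z‖
              ≤ ‖iteratedFDeriv ℝ (n - i) (⇑g) (B z)‖ * ‖B‖ ^ (n - i) :=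
            norm_iFD_comp_le g B (n - i) z
          have e1 := hfA i hi'
          have e2 := hgB (n - i) (Nat.sub_le n i)
          have p1 : (0:ℝ) ≤ (1 + |A z|) ^ k := by positivity
          have p2 : (0:ℝ) ≤ (1 + |B z|) ^ k := by positivity
          calc ((1 + |A z|) ^ k * (1 + |B z|) ^ k) *
                ((n.choose i : ℝ)
                  * ‖iteratedFDeriv ℝ i (fun w : ℝ × ℝ => f (A w)) z‖
                  * ‖iteratedFDeriv ℝ (n - i) (fun w : ℝ × ℝ => g (B w)) z‖)
              ≤ ((1 + |A z|) ^ k * (1 + |B z|) ^ k) *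
                ((n.choose i : ℝ)
                  * (‖iteratedFDeriv ℝ i (⇑f) (A z)‖ * ‖A‖ ^ i)
                  * (‖iteratedFDeriv ℝ (n - i) (⇑g) (B z)‖ * ‖B‖ ^ (n - i))) := by
                apply mul_le_mul_of_nonneg_left _ (by positivity)
                apply mul_le_mul _ h2 (norm_nonneg _) (by positivity)
                exact mul_le_mul_of_nonneg_left h1 (by positivity)
            _ = (n.choose i : ℝ)
                  * (((1 + |A z|) ^ k * ‖iteratedFDeriv ℝ i (⇑f) (A z)‖) * ‖A‖ ^ i)
                  * (((1 + |B z|) ^ k * ‖iteratedFDeriv ℝ (n - i) (⇑g) (B z)‖) * ‖B‖ ^ (n - i)) := by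
                ring
            _ ≤ (n.choose i : ℝ) * (Sf * ‖A‖ ^ i) * (Sg * ‖B‖ ^ (n - i)) := by
                have q1 : ((1 + |A z|) ^ k * ‖iteratedFDeriv ℝ i (⇑f) (A z)‖) * ‖A‖ ^ i
                    ≤ Sf * ‖A‖ ^ i := mul_le_mul_of_nonneg_right e1 (by positivity)
                have q2 : ((1 + |B z|) ^ k * ‖iteratedFDeriv ℝ (n - i) (⇑g) (B z)‖) * ‖B‖ ^ (n - i)
                    ≤ Sg * ‖B‖ ^ (n - i) := mul_le_mul_of_nonneg_right e2 (by positivity)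
                have q1' : (0:ℝ) ≤ ((1 + |A z|) ^ k * ‖iteratedFDeriv ℝ i (⇑f) (A z)‖) * ‖A‖ ^ i := by
                  positivity
                apply mul_le_mul _ q2 (by positivity) (by positivity)
                exact mul_le_mul_of_nonneg_left q1 (by positivity)

@[simp] lemma tensorComp_apply (A B : (ℝ × ℝ) →L[ℝ] ℝ) (hAB) (f g : S1) (z : ℝ × ℝ) :
    tensorComp A B hAB f g z = f (A z) * g (B z) := rfl


/-- Multiplication by a real linear functional of the coordinates. -/
def mulCoord (c : (ℝ × ℝ) →L[ℝ] ℝ) : S2 →L[ℝ] S2 :=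
  SchwartzMap.bilinLeftCLM ((ContinuousLinearMap.lsmul ℝ ℝ : ℝ →L[ℝ] ℂ →L[ℝ] ℂ).flip)
    c.hasTemperateGrowth

@[simp] lemma mulCoord_apply (c : (ℝ × ℝ) →L[ℝ] ℝ) (Φ : S2) (z : ℝ × ℝ) :
    mulCoord c Φ z = (c z : ℂ) * Φ z := rfl

/-- Multiplication by the coordinate function on `ℝ`. -/
def mulCoord1 : S1 →L[ℝ] S1 :=
  SchwartzMap.bilinLeftCLM ((ContinuousLinearMap.lsmul ℝ ℝ : ℝ →L[ℝ] ℂ →L[ℝ] ℂ).flip)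
    (ContinuousLinearMap.id ℝ ℝ).hasTemperateGrowth

@[simp] lemma mulCoord1_apply (f : S1) (x : ℝ) :
    mulCoord1 f x = (x : ℂ) * f x := rfl

/-- Conjugation of a Schwartz function. -/
def conjS (f : S1) : S1 where
  toFun := fun x => conj (f x)
  smooth' := Complex.conjCLE.toContinuousLinearMap.contDiff.comp (f.smooth ⊤)
  decay' := by
    intro k n
    obtain ⟨C, hC⟩ := f.decay' k n
    refine ⟨C, fun x => ?_⟩
    have : ‖iteratedFDeriv ℝ n (fun x => (conj (f x) : ℂ)) x‖
        = ‖iteratedFDeriv ℝ n (⇑f) x‖ := by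
      have : (fun x => (conj (f x) : ℂ)) = (⇑Complex.conjLIE ∘ ⇑f) := rfl
      rw [this, LinearIsometryEquiv.norm_iteratedFDeriv_comp_left]
    rw [this]; exact hC x

@[simp] lemma conjS_apply (f : S1) (x : ℝ) : conjS f x = conj (f x) := rfl

/-- Uniform decay of a 2D Schwartz function in the second variable. -/
lemma decay_snd (Φ : S2) : ∃ C : ℝ, 0 ≤ C ∧ ∀ X t : ℝ, ‖Φ (X, t)‖ ≤ C * (1 + t ^ 2)⁻¹ := by
  set S : ℝ := 2 ^ 2 * ((Finset.Iic (2, 0)).sup (schwartzSeminormFamily ℝ (ℝ × ℝ) ℂ)) Φ with hS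
  have hS0 : 0 ≤ S := by
    rw [hS]; positivity
  refine ⟨S, hS0, fun X t => ?_⟩
  have h := one_add_le_sup_seminorm_apply (𝕜 := ℝ) (m := (2, 0)) le_rfl le_rfl Φ (X, t)
  rw [norm_iteratedFDeriv_zero] at h
  have h1 : |t| ≤ ‖(X, t)‖ := by
    rw [Prod.norm_def]; simpa [Real.norm_eq_abs] using le_max_right ‖X‖ ‖t‖
  have h2 : t ^ 2 ≤ ‖(X, t)‖ ^ 2 := by
    rw [← _root_.sq_abs t]; exact pow_le_pow_left₀ (abs_nonneg t) h1 2
  have ht : (1 + t ^ 2) ≤ (1 + ‖(X, t)‖) ^ 2 := by nlinarith [norm_nonneg (X, t)]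
  have hpos : (0:ℝ) < 1 + t ^ 2 := by positivity
  rw [← div_eq_mul_inv, le_div_iff₀ hpos]
  calc ‖Φ (X, t)‖ * (1 + t ^ 2) ≤ ‖Φ (X, t)‖ * (1 + ‖(X, t)‖) ^ 2 :=
        mul_le_mul_of_nonneg_left ht (norm_nonneg _)
    _ ≤ S := by rw [mul_comm]; exact h

lemma cont_fiber (Φ : S2) (X : ℝ) : Continuous fun t : ℝ => Φ (X, t) :=
  Φ.continuous.comp (Continuous.prodMk_right X)

lemma integrable_fiber (Φ : S2) (X : ℝ) : Integrable (fun t : ℝ => Φ (X, t)) := by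
  obtain ⟨C, hC0, hC⟩ := decay_snd Φ
  refine (integrable_inv_one_add_sq.const_mul C).mono'
    ((cont_fiber Φ X).aestronglyMeasurable) ?_
  filter_upwards with t
  simpa using hC X t

lemma norm_kernel (Ξ t : ℝ) : ‖Complex.exp (-(Complex.I * Ξ * t))‖ = 1 := by
  rw [Complex.norm_exp]
  simp

/-- The fiberwise Fourier transform, with kernel `e^{-iΞt}`. -/
def P (Φ : S2) (X Ξ : ℝ) : ℂ := ∫ t : ℝ, Complex.exp (-(Complex.I * Ξ * t)) * Φ (X, t)

lemma integrable_P_integrand (Φ : S2) (X Ξ : ℝ) :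
    Integrable (fun t : ℝ => Complex.exp (-(Complex.I * Ξ * t)) * Φ (X, t)) := by
  have hc : Continuous fun t : ℝ => Complex.exp (-(Complex.I * Ξ * t)) := by
    fun_prop
  refine (integrable_fiber Φ X).norm.mono' ((hc.mul (cont_fiber Φ X)).aestronglyMeasurable) ?_
  filter_upwards with t
  rw [norm_mul, norm_kernel]
  simp

lemma P_eq_fourier (Φ : S2) (X Ξ : ℝ) :
    P Φ X Ξ = 𝓕 (fun t : ℝ => Φ (X, t)) (Ξ / (2 * π)) := by
  rw [Real.fourier_real_eq_integral_exp_smul, P]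
  refine integral_congr_ae (Filter.Eventually.of_forall fun t => ?_)
  show Complex.exp (-(Complex.I * Ξ * t)) * Φ (X, t)
      = Complex.exp (((-2 * π * t * (Ξ / (2 * π)) : ℝ) : ℂ) * Complex.I) • Φ (X, t)
  rw [smul_eq_mul]
  congr 2
  have hπ : (π : ℝ) ≠ 0 := Real.pi_ne_zero
  have harg : (-2 * π * t * (Ξ / (2 * π)) : ℝ) = -(Ξ * t) := by field_simp
  rw [harg]
  push_cast
  ring


/-- First-variable derivative operator. -/
def d1 : S2 →L[ℝ] S2 := LineDeriv.lineDerivOpCLM ℝ S2 ((1:ℝ), (0:ℝ))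
/-- Second-variable derivative operator. -/
def d2 : S2 →L[ℝ] S2 := LineDeriv.lineDerivOpCLM ℝ S2 ((0:ℝ), (1:ℝ))
/-- Multiplication by `-i t` (second coordinate). -/
def mT (Φ : S2) : S2 := (-(Complex.I)) • (mulCoord (ContinuousLinearMap.snd ℝ ℝ ℝ) Φ)
/-- Multiplication by the first coordinate. -/
def mX (Φ : S2) : S2 := mulCoord (ContinuousLinearMap.fst ℝ ℝ ℝ) Φ

lemma d1_apply (Φ : S2) (z : ℝ × ℝ) : d1 Φ z = fderiv ℝ Φ z (1, 0) :=
  SchwartzMap.lineDerivOp_apply_eq_fderiv _ Φ z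

lemma d2_apply (Φ : S2) (z : ℝ × ℝ) : d2 Φ z = fderiv ℝ Φ z (0, 1) :=
  SchwartzMap.lineDerivOp_apply_eq_fderiv _ Φ z

lemma mT_apply (Φ : S2) (z : ℝ × ℝ) : mT Φ z = -(Complex.I * z.2) * Φ z := by
  rw [mT, SchwartzMap.smul_apply, mulCoord_apply]
  simp; ring

lemma mX_apply (Φ : S2) (z : ℝ × ℝ) : mX Φ z = (z.1 : ℂ) * Φ z := by
  rw [mX, mulCoord_apply]; rfl

lemma hasDerivAt_fiber_fst (Φ : S2) (t : ℝ) (x : ℝ) :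
    HasDerivAt (fun u : ℝ => Φ (u, t)) (d1 Φ (x, t)) x := by
  have hg : HasDerivAt (fun u : ℝ => ((u, t) : ℝ × ℝ)) ((1:ℝ), (0:ℝ)) x :=
    (hasDerivAt_id x).prodMk (hasDerivAt_const x t)
  have h := (Φ.differentiableAt.hasFDerivAt).comp_hasDerivAt x hg
  rwa [d1_apply]

lemma hasDerivAt_fiber_snd (Φ : S2) (X : ℝ) (t : ℝ) :
    HasDerivAt (fun s : ℝ => Φ (X, s)) (d2 Φ (X, t)) t := by
  have hg : HasDerivAt (fun s : ℝ => ((X, s) : ℝ × ℝ)) ((0:ℝ), (1:ℝ)) t :=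
    (hasDerivAt_const t X).prodMk (hasDerivAt_id t)
  have h := (Φ.differentiableAt.hasFDerivAt).comp_hasDerivAt t hg
  rwa [d2_apply]

lemma hasDerivAt_P_fst (Φ : S2) (Ξ : ℝ) (X : ℝ) :
    HasDerivAt (fun x : ℝ => P Φ x Ξ) (P (d1 Φ) X Ξ) X := by
  obtain ⟨C, hC0, hC⟩ := decay_snd (d1 Φ)
  have main := hasDerivAt_integral_of_dominated_loc_of_deriv_le
    (F := fun (x : ℝ) (t : ℝ) => Complex.exp (-(Complex.I * Ξ * t)) * Φ (x, t))
    (F' := fun (x : ℝ) (t : ℝ) => Complex.exp (-(Complex.I * Ξ * t)) * (d1 Φ) (x, t))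
    (x₀ := X) (bound := fun t => C * (1 + t ^ 2)⁻¹) (s := Metric.ball X 1) (Metric.ball_mem_nhds X one_pos)
    (Filter.Eventually.of_forall fun x =>
      (integrable_P_integrand Φ x Ξ).aestronglyMeasurable)
    (integrable_P_integrand Φ X Ξ)
    (integrable_P_integrand (d1 Φ) X Ξ).aestronglyMeasurable
    (Filter.Eventually.of_forall fun t => fun x _ => by
      rw [norm_mul, norm_kernel, one_mul]
      exact hC x t)
    (integrable_inv_one_add_sq.const_mul C)
    (Filter.Eventually.of_forall fun t => fun x _ =>
      (hasDerivAt_fiber_fst Φ t x).const_mul (Complex.exp (-(Complex.I * Ξ * t))))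
  exact main.2

lemma hasDerivAt_P_snd (Φ : S2) (X : ℝ) (Ξ : ℝ) :
    HasDerivAt (fun ξ : ℝ => P Φ X ξ) (P (mT Φ) X Ξ) Ξ := by
  obtain ⟨C, hC0, hC⟩ := decay_snd (mT Φ)
  have key : ∀ (ξ t : ℝ), HasDerivAt (fun ξ : ℝ => Complex.exp (-(Complex.I * ξ * t)) * Φ (X, t))
      (Complex.exp (-(Complex.I * ξ * t)) * (mT Φ) (X, t)) ξ := by
    intro ξ t
    have hre : HasDerivAt (fun ξ : ℝ => (ξ : ℂ)) 1 ξ := by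
      simpa using (hasDerivAt_id ξ).ofReal_comp
    have h1 : HasDerivAt (fun ξ : ℝ => -(Complex.I * ξ * t)) (-(Complex.I * 1 * t)) ξ :=
      ((hre.const_mul Complex.I).mul_const (t : ℂ)).neg
    have h2 := (h1.cexp).mul_const (Φ (X, t))
    have : Complex.exp (-(Complex.I * ξ * t)) * -(Complex.I * 1 * t) * Φ (X, t)
        = Complex.exp (-(Complex.I * ξ * t)) * (mT Φ) (X, t) := by
      rw [mT_apply]; ring
    rwa [this] at h2
  have main := hasDerivAt_integral_of_dominated_loc_of_deriv_le
    (F := fun (ξ : ℝ) (t : ℝ) => Complex.exp (-(Complex.I * ξ * t)) * Φ (X, t))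
    (F' := fun (ξ : ℝ) (t : ℝ) => Complex.exp (-(Complex.I * ξ * t)) * (mT Φ) (X, t))
    (x₀ := Ξ) (bound := fun t => C * (1 + t ^ 2)⁻¹) (s := Metric.ball Ξ 1) (Metric.ball_mem_nhds Ξ one_pos)
    (Filter.Eventually.of_forall fun ξ =>
      (integrable_P_integrand Φ X ξ).aestronglyMeasurable)
    (integrable_P_integrand Φ X Ξ)
    (integrable_P_integrand (mT Φ) X Ξ).aestronglyMeasurable
    (Filter.Eventually.of_forall fun t => fun ξ _ => by
      rw [norm_mul, norm_kernel, one_mul]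
      exact hC X t)
    (integrable_inv_one_add_sq.const_mul C)
    (Filter.Eventually.of_forall fun t => fun ξ _ => key ξ t)
  exact main.2

/-- Integration by parts in the second variable. -/
lemma P_d2 (Φ : S2) (X Ξ : ℝ) : P (d2 Φ) X Ξ = Complex.I * Ξ * P Φ X Ξ := by
  have hfib : Differentiable ℝ (fun t : ℝ => Φ (X, t)) := fun t =>
    (hasDerivAt_fiber_snd Φ X t).differentiableAt
  have hderiv : deriv (fun t : ℝ => Φ (X, t)) = fun t => (d2 Φ) (X, t) :=
    funext fun t => (hasDerivAt_fiber_snd Φ X t).deriv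
  have hd : Integrable (deriv (fun t : ℝ => Φ (X, t))) := by
    rw [hderiv]; exact integrable_fiber (d2 Φ) X
  have key := Real.fourier_deriv (integrable_fiber Φ X) hfib hd
  have hπ : (π : ℂ) ≠ 0 := by exact_mod_cast Real.pi_ne_zero
  calc P (d2 Φ) X Ξ = 𝓕 (fun t : ℝ => (d2 Φ) (X, t)) (Ξ / (2 * π)) :=
        P_eq_fourier _ X Ξ
    _ = 𝓕 (deriv (fun t : ℝ => Φ (X, t))) (Ξ / (2 * π)) := by rw [hderiv]
    _ = (2 * π * Complex.I * ((Ξ / (2 * π) : ℝ) : ℂ))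
          • 𝓕 (fun t : ℝ => Φ (X, t)) (Ξ / (2 * π)) := by rw [key]
    _ = Complex.I * Ξ * P Φ X Ξ := by
        rw [P_eq_fourier, smul_eq_mul]
        congr 1
        push_cast
        field_simp

lemma P_add (Φ₁ Φ₂ : S2) (X Ξ : ℝ) : P (Φ₁ + Φ₂) X Ξ = P Φ₁ X Ξ + P Φ₂ X Ξ := by
  rw [P, P, P, ← integral_add (integrable_P_integrand Φ₁ X Ξ) (integrable_P_integrand Φ₂ X Ξ)]
  refine integral_congr_ae (Filter.Eventually.of_forall fun t => ?_)
  simp only [SchwartzMap.add_apply]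
  ring

lemma P_smul (c : ℂ) (Φ : S2) (X Ξ : ℝ) : P (c • Φ) X Ξ = c * P Φ X Ξ := by
  rw [P, P, ← integral_const_mul]
  refine integral_congr_ae (Filter.Eventually.of_forall fun t => ?_)
  simp only [SchwartzMap.smul_apply, smul_eq_mul]
  ring

lemma P_sub (Φ₁ Φ₂ : S2) (X Ξ : ℝ) : P (Φ₁ - Φ₂) X Ξ = P Φ₁ X Ξ - P Φ₂ X Ξ := by
  have h : Φ₁ - Φ₂ + Φ₂ = Φ₁ := by abel
  have h2 := P_add (Φ₁ - Φ₂) Φ₂ X Ξ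
  rw [h] at h2
  linear_combination -h2


def P2 (Φ : S2) : ℝ × ℝ → ℂ := fun z => P Φ z.1 z.2

def LL1 : ℂ →L[ℝ] (ℝ × ℝ) →L[ℝ] ℂ :=
  ContinuousLinearMap.smulRightL ℝ (ℝ × ℝ) ℂ (ContinuousLinearMap.fst ℝ ℝ ℝ)
def LL2 : ℂ →L[ℝ] (ℝ × ℝ) →L[ℝ] ℂ :=
  ContinuousLinearMap.smulRightL ℝ (ℝ × ℝ) ℂ (ContinuousLinearMap.snd ℝ ℝ ℝ)

def Lc (a b : ℂ) : (ℝ × ℝ) →L[ℝ] ℂ := LL1 a + LL2 b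

lemma Lc_apply (a b : ℂ) (v : ℝ × ℝ) : Lc a b v = v.1 • a + v.2 • b := rfl

lemma norm_LL1 : ‖LL1‖ ≤ 1 := by
  rw [LL1, ContinuousLinearMap.norm_smulRightL]
  exact ContinuousLinearMap.norm_fst_le ℝ ℝ ℝ

lemma norm_LL2 : ‖LL2‖ ≤ 1 := by
  rw [LL2, ContinuousLinearMap.norm_smulRightL]
  exact ContinuousLinearMap.norm_snd_le ℝ ℝ ℝ

lemma norm_Lc_le (a b : ℂ) : ‖Lc a b‖ ≤ ‖a‖ + ‖b‖ := by
  refine (norm_add_le _ _).trans ?_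
  gcongr
  · exact (LL1.le_opNorm a).trans (by nlinarith [norm_LL1, norm_nonneg a])
  · exact (LL2.le_opNorm b).trans (by nlinarith [norm_LL2, norm_nonneg b])

lemma hasFDerivAt_P2 (Φ : S2) (z : ℝ × ℝ) :
    HasFDerivAt (P2 Φ) (Lc (P2 (d1 Φ) z) (P2 (mT Φ) z)) z := by
  obtain ⟨C1, hC10, hC1⟩ := decay_snd (d1 Φ)
  obtain ⟨C2, hC20, hC2⟩ := decay_snd (mT Φ)
  have hdiff : ∀ (w : ℝ × ℝ) (t : ℝ),
      HasFDerivAt (fun w : ℝ × ℝ => Complex.exp (-(Complex.I * w.2 * t)) * Φ (w.1, t))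
        (Lc (Complex.exp (-(Complex.I * w.2 * t)) * (d1 Φ) (w.1, t))
            (Complex.exp (-(Complex.I * w.2 * t)) * (mT Φ) (w.1, t))) w := by
    intro w t
    have hlin : (fun w : ℝ × ℝ => -(Complex.I * w.2 * t))
        = ⇑((ContinuousLinearMap.snd ℝ ℝ ℝ).smulRight (-(Complex.I * t))) := by
      funext v
      rw [ContinuousLinearMap.smulRight_apply, ContinuousLinearMap.coe_snd', real_smul]
      push_cast
      ring
    have hexp : HasFDerivAt (fun w : ℝ × ℝ => Complex.exp (-(Complex.I * w.2 * t)))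
        (Complex.exp (-(Complex.I * w.2 * t)) •
          ((ContinuousLinearMap.snd ℝ ℝ ℝ).smulRight (-(Complex.I * t)))) w := by
      have h0 := ((ContinuousLinearMap.snd ℝ ℝ ℝ).smulRight
        (-(Complex.I * t))).hasFDerivAt (x := w)
      rw [← hlin] at h0
      exact h0.cexp
    have hN : HasFDerivAt (fun w : ℝ × ℝ => ((w.1, t) : ℝ × ℝ))
        ((ContinuousLinearMap.fst ℝ ℝ ℝ).prod 0) w :=
      (hasFDerivAt_fst).prodMk (hasFDerivAt_const t w)
    have hphi : HasFDerivAt (fun w : ℝ × ℝ => Φ (w.1, t))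
        ((fderiv ℝ Φ (w.1, t)).comp ((ContinuousLinearMap.fst ℝ ℝ ℝ).prod 0)) w :=
      (Φ.differentiableAt.hasFDerivAt).comp w hN
    have hmul := hexp.mul hphi
    refine hmul.congr_fderiv ?_
    apply ContinuousLinearMap.ext
    intro v
    have hv : ((v.1, (0:ℝ)) : ℝ × ℝ) = v.1 • (((1:ℝ), (0:ℝ)) : ℝ × ℝ) := by
      simp [Prod.smul_def]
    simp only [ContinuousLinearMap.add_apply, ContinuousLinearMap.smul_apply,
      ContinuousLinearMap.comp_apply, ContinuousLinearMap.prod_apply,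
      ContinuousLinearMap.coe_fst', ContinuousLinearMap.coe_snd',
      ContinuousLinearMap.zero_apply, ContinuousLinearMap.smulRight_apply,
      Lc_apply]
    rw [hv, (fderiv ℝ Φ (w.1, t)).map_smul]
    rw [← d1_apply]
    have hmT : (mT Φ) (w.1, t) = -(Complex.I * t) * Φ (w.1, t) := by
      rw [mT_apply]
    rw [hmT]
    simp only [smul_eq_mul, real_smul, smul_smul]
    push_cast
    ring
  have main := hasFDerivAt_integral_of_dominated_of_fderiv_le
    (F := fun (w : ℝ × ℝ) (t : ℝ) => Complex.exp (-(Complex.I * w.2 * t)) * Φ (w.1, t))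
    (F' := fun (w : ℝ × ℝ) (t : ℝ) =>
      Lc (Complex.exp (-(Complex.I * w.2 * t)) * (d1 Φ) (w.1, t))
         (Complex.exp (-(Complex.I * w.2 * t)) * (mT Φ) (w.1, t)))
    (x₀ := z) (bound := fun t => (C1 + C2) * (1 + t ^ 2)⁻¹) (s := Metric.ball z 1) (Metric.ball_mem_nhds z one_pos)
    (Filter.Eventually.of_forall fun w =>
      (integrable_P_integrand Φ w.1 w.2).aestronglyMeasurable)
    (integrable_P_integrand Φ z.1 z.2)
    ?_ ?_ ((integrable_inv_one_add_sq.const_mul (C1 + C2)))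
    (Filter.Eventually.of_forall fun t => fun w _ => hdiff w t)
  · have hint1 : Integrable (fun t : ℝ =>
        Complex.exp (-(Complex.I * z.2 * t)) * (d1 Φ) (z.1, t)) :=
      integrable_P_integrand (d1 Φ) z.1 z.2
    have hint2 : Integrable (fun t : ℝ =>
        Complex.exp (-(Complex.I * z.2 * t)) * (mT Φ) (z.1, t)) :=
      integrable_P_integrand (mT Φ) z.1 z.2
    have heq : (∫ t : ℝ, Lc (Complex.exp (-(Complex.I * z.2 * t)) * (d1 Φ) (z.1, t))
        (Complex.exp (-(Complex.I * z.2 * t)) * (mT Φ) (z.1, t)))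
        = Lc (P2 (d1 Φ) z) (P2 (mT Φ) z) := by
      rw [show (fun t : ℝ => Lc (Complex.exp (-(Complex.I * z.2 * t)) * (d1 Φ) (z.1, t))
          (Complex.exp (-(Complex.I * z.2 * t)) * (mT Φ) (z.1, t)))
        = (fun t : ℝ => LL1 (Complex.exp (-(Complex.I * z.2 * t)) * (d1 Φ) (z.1, t))
            + LL2 (Complex.exp (-(Complex.I * z.2 * t)) * (mT Φ) (z.1, t))) from rfl]
      rw [integral_add (LL1.integrable_comp hint1) (LL2.integrable_comp hint2)]
      rw [ContinuousLinearMap.integral_comp_comm _ hint1,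
        ContinuousLinearMap.integral_comp_comm _ hint2]
      rfl
    rw [heq] at main
    exact main
  · -- measurability of F' z
    apply Continuous.aestronglyMeasurable
    have hc1 : Continuous fun t : ℝ => Complex.exp (-(Complex.I * z.2 * t)) * (d1 Φ) (z.1, t) := by
      have := (integrable_P_integrand (d1 Φ) z.1 z.2)
      fun_prop
    have hc2 : Continuous fun t : ℝ => Complex.exp (-(Complex.I * z.2 * t)) * (mT Φ) (z.1, t) := by
      fun_prop
    exact (LL1.continuous.comp hc1).add (LL2.continuous.comp hc2)
  · -- bound
    refine Filter.Eventually.of_forall fun t => fun w _ => ?_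
    refine (norm_Lc_le _ _).trans ?_
    show _ ≤ (C1 + C2) * (1 + t ^ 2)⁻¹
    rw [norm_mul, norm_mul, norm_kernel, one_mul, one_mul, add_mul]
    exact add_le_add (hC1 w.1 t) (hC2 w.1 t)

lemma differentiable_P2 (Φ : S2) : Differentiable ℝ (P2 Φ) := fun z =>
  (hasFDerivAt_P2 Φ z).differentiableAt

lemma fderiv_P2 (Φ : S2) :
    fderiv ℝ (P2 Φ) = fun z => Lc (P2 (d1 Φ) z) (P2 (mT Φ) z) :=
  funext fun z => (hasFDerivAt_P2 Φ z).fderiv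

lemma contDiff_P2 : ∀ (n : ℕ) (Φ : S2), ContDiff ℝ n (P2 Φ) := by
  intro n
  induction n with
  | zero =>
    intro Φ
    rw [show ((0:ℕ) : WithTop ℕ∞) = 0 from rfl, contDiff_zero]
    exact (differentiable_P2 Φ).continuous
  | succ n ih =>
    intro Φ
    rw [show ((n+1:ℕ) : WithTop ℕ∞) = (n : WithTop ℕ∞) + 1 by norm_cast]
    rw [contDiff_succ_iff_fderiv]
    refine ⟨differentiable_P2 Φ, ?_, ?_⟩
    · intro h
      exfalso
      exact (by simp : ((n:ℕ) : WithTop ℕ∞) ≠ ⊤) h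
    · rw [fderiv_P2]
      have h1 : ContDiff ℝ n (fun z => LL1 (P2 (d1 Φ) z)) :=
        LL1.contDiff.comp (ih (d1 Φ))
      have h2 : ContDiff ℝ n (fun z => LL2 (P2 (mT Φ) z)) :=
        LL2.contDiff.comp (ih (mT Φ))
      exact h1.add h2

set_option maxHeartbeats 1000000 in
lemma norm_iFD_P2_succ (n : ℕ) (Φ : S2) (z : ℝ × ℝ) :
    ‖iteratedFDeriv ℝ (n+1) (P2 Φ) z‖
      ≤ ‖iteratedFDeriv ℝ n (P2 (d1 Φ)) z‖ + ‖iteratedFDeriv ℝ n (P2 (mT Φ)) z‖ := by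
  rw [← norm_iteratedFDeriv_fderiv, fderiv_P2]
  have h1 : ContDiff ℝ n (fun z => LL1 (P2 (d1 Φ) z)) := LL1.contDiff.comp (contDiff_P2 n _)
  have h2 : ContDiff ℝ n (fun z => LL2 (P2 (mT Φ) z)) := LL2.contDiff.comp (contDiff_P2 n _)
  have hsum : iteratedFDeriv ℝ n (fun z => Lc (P2 (d1 Φ) z) (P2 (mT Φ) z)) z
      = iteratedFDeriv ℝ n (fun z => LL1 (P2 (d1 Φ) z)) z
        + iteratedFDeriv ℝ n (fun z => LL2 (P2 (mT Φ) z)) z := by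
    rw [show (fun z => Lc (P2 (d1 Φ) z) (P2 (mT Φ) z))
      = (fun z => LL1 (P2 (d1 Φ) z) + LL2 (P2 (mT Φ) z)) from rfl]
    exact iteratedFDeriv_add_apply h1.contDiffAt h2.contDiffAt
  rw [hsum]
  refine (norm_add_le _ _).trans (add_le_add ?_ ?_)
  · have he : iteratedFDeriv ℝ n (fun z => LL1 (P2 (d1 Φ) z)) z
        = LL1.compContinuousMultilinearMap (iteratedFDeriv ℝ n (P2 (d1 Φ)) z) :=
      LL1.iteratedFDeriv_comp_left (contDiff_P2 n _).contDiffAt le_rfl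
    rw [he]
    refine (LL1.norm_compContinuousMultilinearMap_le _).trans ?_
    nlinarith [norm_LL1, norm_nonneg (iteratedFDeriv ℝ n (P2 (d1 Φ)) z)]
  · have he : iteratedFDeriv ℝ n (fun z => LL2 (P2 (mT Φ) z)) z
        = LL2.compContinuousMultilinearMap (iteratedFDeriv ℝ n (P2 (mT Φ)) z) :=
      LL2.iteratedFDeriv_comp_left (contDiff_P2 n _).contDiffAt le_rfl
    rw [he]
    refine (LL2.norm_compContinuousMultilinearMap_le _).trans ?_
    nlinarith [norm_LL2, norm_nonneg (iteratedFDeriv ℝ n (P2 (mT Φ)) z)]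

lemma P_mX (Φ : S2) (X Ξ : ℝ) : P (mX Φ) X Ξ = (X : ℂ) * P Φ X Ξ := by
  rw [P, P, ← integral_const_mul]
  refine integral_congr_ae (Filter.Eventually.of_forall fun t => ?_)
  simp only [mX_apply]
  ring

lemma P2_decay : ∀ (k : ℕ) (Φ : S2), ∃ C : ℝ, 0 ≤ C ∧ ∀ z : ℝ × ℝ, ‖z‖ ^ k * ‖P2 Φ z‖ ≤ C := by
  intro k
  induction k with
  | zero =>
    intro Φ
    obtain ⟨C, hC0, hC⟩ := decay_snd Φ
    refine ⟨C * π, by positivity, fun z => ?_⟩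
    simp only [pow_zero, one_mul]
    calc ‖P2 Φ z‖ ≤ ∫ t : ℝ, ‖Complex.exp (-(Complex.I * z.2 * t)) * Φ (z.1, t)‖ :=
          norm_integral_le_integral_norm _
      _ ≤ ∫ t : ℝ, C * (1 + t ^ 2)⁻¹ := by
          refine integral_mono (integrable_P_integrand Φ z.1 z.2).norm
            (integrable_inv_one_add_sq.const_mul C) fun t => ?_
          rw [norm_mul, norm_kernel, one_mul]
          exact hC z.1 t
      _ = C * π := by rw [integral_const_mul, integral_univ_inv_one_add_sq]
  | succ k ih =>
    intro Φ
    obtain ⟨C1, h10, h1⟩ := ih (mX Φ)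
    obtain ⟨C2, h20, h2⟩ := ih (d2 Φ)
    refine ⟨C1 + C2, by positivity, fun z => ?_⟩
    have hz : ‖z‖ ≤ |z.1| + |z.2| := by
      rw [Prod.norm_def]
      rcases max_cases ‖z.1‖ ‖z.2‖ with ⟨h, _⟩ | ⟨h, _⟩ <;> rw [h] <;>
        simp [Real.norm_eq_abs, abs_nonneg] <;> positivity
    have key1 : |z.1| * ‖P2 Φ z‖ = ‖P2 (mX Φ) z‖ := by
      rw [P2, P2, P_mX]
      rw [norm_mul, Complex.norm_real, Real.norm_eq_abs]
    have key2 : |z.2| * ‖P2 Φ z‖ = ‖P2 (d2 Φ) z‖ := by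
      rw [P2, P2, P_d2]
      rw [norm_mul, norm_mul, Complex.norm_I, one_mul, Complex.norm_real, Real.norm_eq_abs]
    calc ‖z‖ ^ (k+1) * ‖P2 Φ z‖ = ‖z‖ * (‖z‖ ^ k * ‖P2 Φ z‖) := by ring
      _ ≤ (|z.1| + |z.2|) * (‖z‖ ^ k * ‖P2 Φ z‖) := by
          apply mul_le_mul_of_nonneg_right hz
          positivity
      _ = ‖z‖ ^ k * (|z.1| * ‖P2 Φ z‖) + ‖z‖ ^ k * (|z.2| * ‖P2 Φ z‖) := by ring
      _ = ‖z‖ ^ k * ‖P2 (mX Φ) z‖ + ‖z‖ ^ k * ‖P2 (d2 Φ) z‖ := by rw [key1, key2]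
      _ ≤ C1 + C2 := add_le_add (h1 z) (h2 z)

lemma P2_decay_iFD : ∀ (n k : ℕ) (Φ : S2), ∃ C : ℝ, ∀ z : ℝ × ℝ,
    ‖z‖ ^ k * ‖iteratedFDeriv ℝ n (P2 Φ) z‖ ≤ C := by
  intro n
  induction n with
  | zero =>
    intro k Φ
    obtain ⟨C, _, hC⟩ := P2_decay k Φ
    exact ⟨C, fun z => by rw [norm_iteratedFDeriv_zero]; exact hC z⟩
  | succ n ih =>
    intro k Φ
    obtain ⟨C1, h1⟩ := ih k (d1 Φ)
    obtain ⟨C2, h2⟩ := ih k (mT Φ)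
    refine ⟨C1 + C2, fun z => ?_⟩
    calc ‖z‖ ^ k * ‖iteratedFDeriv ℝ (n+1) (P2 Φ) z‖
        ≤ ‖z‖ ^ k * (‖iteratedFDeriv ℝ n (P2 (d1 Φ)) z‖
            + ‖iteratedFDeriv ℝ n (P2 (mT Φ)) z‖) := by
          apply mul_le_mul_of_nonneg_left (norm_iFD_P2_succ n Φ z)
          positivity
      _ = ‖z‖ ^ k * ‖iteratedFDeriv ℝ n (P2 (d1 Φ)) z‖
            + ‖z‖ ^ k * ‖iteratedFDeriv ℝ n (P2 (mT Φ)) z‖ := by ring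
      _ ≤ C1 + C2 := add_le_add (h1 z) (h2 z)

/-- `P2 Φ` as a Schwartz map. -/
def SchwartzW (Φ : S2) : S2 where
  toFun := P2 Φ
  smooth' := by
    have h : ∀ n : ℕ, ContDiff ℝ n (P2 Φ) := fun n => contDiff_P2 n Φ
    exact_mod_cast contDiff_infty.mpr h
  decay' := fun k n => P2_decay_iFD n k Φ

@[simp] lemma SchwartzW_apply (Φ : S2) (z : ℝ × ℝ) : SchwartzW Φ z = P Φ z.1 z.2 := rfl


def Amap : (ℝ × ℝ) →L[ℝ] ℝ :=
  ContinuousLinearMap.fst ℝ ℝ ℝ + (2⁻¹ : ℝ) • ContinuousLinearMap.snd ℝ ℝ ℝ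
def Bmap : (ℝ × ℝ) →L[ℝ] ℝ :=
  ContinuousLinearMap.fst ℝ ℝ ℝ - (2⁻¹ : ℝ) • ContinuousLinearMap.snd ℝ ℝ ℝ

lemma Amap_apply (z : ℝ × ℝ) : Amap z = z.1 + z.2 / 2 := by
  simp [Amap, ContinuousLinearMap.add_apply, ContinuousLinearMap.smul_apply]
  ring

lemma Bmap_apply (z : ℝ × ℝ) : Bmap z = z.1 - z.2 / 2 := by
  simp [Bmap, ContinuousLinearMap.sub_apply, ContinuousLinearMap.smul_apply]
  ring

lemma hAB : ∀ z : ℝ × ℝ, ‖z‖ ≤ |Amap z| + |Bmap z| := by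
  intro z
  rw [Prod.norm_def, Amap_apply, Bmap_apply]
  have h1 : |z.1| ≤ |z.1 + z.2/2| + |z.1 - z.2/2| := by
    have := abs_add_le (z.1 + z.2/2) (z.1 - z.2/2)
    have h : z.1 + z.2/2 + (z.1 - z.2/2) = 2 * z.1 := by ring
    rw [h] at this
    rw [abs_mul] at this
    simp at this
    linarith [abs_nonneg z.1]
  have h2 : |z.2| ≤ |z.1 + z.2/2| + |z.1 - z.2/2| := by
    have := abs_sub (z.1 + z.2/2) (z.1 - z.2/2)
    have h : z.1 + z.2/2 - (z.1 - z.2/2) = z.2 := by ring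
    rw [h] at this
    linarith
  exact max_le (by simpa [Real.norm_eq_abs] using h1) (by simpa [Real.norm_eq_abs] using h2)

/-- The Schwartz function `(u,t) ↦ f(u + t/2) g(u - t/2)`. -/
def T (f g : S1) : S2 := tensorComp Amap Bmap hAB f g

lemma T_apply (f g : S1) (z : ℝ × ℝ) : T f g z = f (Amap z) * g (Bmap z) := rfl

lemma fderiv_T_apply (f g : S1) (z : ℝ × ℝ) (v : ℝ × ℝ) :
    fderiv ℝ (fun w : ℝ × ℝ => f (Amap w) * g (Bmap w)) z v
      = (Amap v : ℂ) * (deriv f (Amap z) * g (Bmap z))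
        + (Bmap v : ℂ) * (f (Amap z) * deriv g (Bmap z)) := by
  have h1 : HasFDerivAt (fun w : ℝ × ℝ => f (Amap w))
      (((ContinuousLinearMap.smulRight (1 : ℝ →L[ℝ] ℝ) (deriv (⇑f) (Amap z))).comp Amap)) z :=
    (((f.differentiableAt).hasDerivAt).hasFDerivAt).comp z Amap.hasFDerivAt
  have h2 : HasFDerivAt (fun w : ℝ × ℝ => g (Bmap w))
      (((ContinuousLinearMap.smulRight (1 : ℝ →L[ℝ] ℝ) (deriv (⇑g) (Bmap z))).comp Bmap)) z :=
    (((g.differentiableAt).hasDerivAt).hasFDerivAt).comp z Bmap.hasFDerivAt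
  have h := (h1.mul h2).fderiv
  rw [show (fun w : ℝ × ℝ => f (Amap w) * g (Bmap w))
      = (fun w => f (Amap w)) * (fun w => g (Bmap w)) from rfl, h]
  simp only [ContinuousLinearMap.add_apply, ContinuousLinearMap.smul_apply,
    ContinuousLinearMap.comp_apply, ContinuousLinearMap.smulRight_apply,
    ContinuousLinearMap.one_apply]
  rw [smul_eq_mul, smul_eq_mul, real_smul, real_smul]
  push_cast
  ring

lemma T_d1 (f g : S1) :
    d1 (T f g) = T (SchwartzMap.derivCLM ℝ ℂ f) g + T f (SchwartzMap.derivCLM ℝ ℂ g) := by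
  apply SchwartzMap.ext
  intro z
  rw [SchwartzMap.add_apply, d1_apply]
  have hTc : (⇑(T f g) : ℝ × ℝ → ℂ) = fun w => f (Amap w) * g (Bmap w) := rfl
  rw [hTc, fderiv_T_apply]
  rw [T_apply, T_apply]
  simp only [SchwartzMap.derivCLM_apply]
  have hA : Amap ((1:ℝ), (0:ℝ)) = 1 := by rw [Amap_apply]; norm_num
  have hB : Bmap ((1:ℝ), (0:ℝ)) = 1 := by rw [Bmap_apply]; norm_num
  rw [hA, hB]
  push_cast
  ring

lemma T_d2 (f g : S1) :
    d2 (T f g) = (2⁻¹ : ℝ) • T (SchwartzMap.derivCLM ℝ ℂ f) g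
      - (2⁻¹ : ℝ) • T f (SchwartzMap.derivCLM ℝ ℂ g) := by
  apply SchwartzMap.ext
  intro z
  rw [SchwartzMap.sub_apply, SchwartzMap.smul_apply, SchwartzMap.smul_apply, d2_apply]
  have hTc : (⇑(T f g) : ℝ × ℝ → ℂ) = fun w => f (Amap w) * g (Bmap w) := rfl
  rw [hTc, fderiv_T_apply]
  rw [T_apply, T_apply]
  simp only [SchwartzMap.derivCLM_apply]
  have hA : Amap ((0:ℝ), (1:ℝ)) = 2⁻¹ := by rw [Amap_apply]; norm_num
  have hB : Bmap ((0:ℝ), (1:ℝ)) = -2⁻¹ := by rw [Bmap_apply]; norm_num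
  rw [hA, hB]
  rw [real_smul, real_smul]
  push_cast
  ring

lemma P_rsmul (r : ℝ) (Φ : S2) (X Ξ : ℝ) : P (r • Φ) X Ξ = (r : ℂ) * P Φ X Ξ := by
  rw [P, P, ← integral_const_mul]
  refine integral_congr_ae (Filter.Eventually.of_forall fun t => ?_)
  simp only [SchwartzMap.smul_apply]
  rw [real_smul]
  ring

/-- Injectivity of the partial Fourier transform. -/
lemma P_eq_zero_imp (Φ : S2) (h : ∀ X Ξ : ℝ, P Φ X Ξ = 0) : ∀ z : ℝ × ℝ, Φ z = 0 := by
  intro z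
  have hF : 𝓕 (fun t : ℝ => Φ (z.1, t)) = 0 := by
    funext w
    have h0 := P_eq_fourier Φ z.1 (2 * π * w)
    rw [h z.1 (2 * π * w)] at h0
    have harg : 2 * π * w / (2 * π) = w := by
      have : (2:ℝ) * π ≠ 0 := by positivity
      field_simp
    rw [harg] at h0
    exact h0.symm.trans rfl
  have hinv := (integrable_fiber Φ z.1).fourierInv_fourier_eq
    (f := fun t : ℝ => Φ (z.1, t)) (by rw [hF]; exact integrable_zero _ _ _)
    ((cont_fiber Φ z.1).continuousAt (x := z.2))
  rw [hF] at hinv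
  have h0 : 𝓕⁻ (0 : ℝ → ℂ) z.2 = 0 := by
    rw [Real.fourierInv_eq]
    simp
  rw [h0] at hinv
  have : Φ (z.1, z.2) = 0 := hinv.symm
  simpa using this


lemma P_def (Φ : S2) (X Ξ : ℝ) :
    P Φ X Ξ = ∫ t : ℝ, Complex.exp (-(Complex.I * Ξ * t)) * Φ (X, t) := rfl

lemma key (φ χ : S1) (lam : ℂ)
    (heig : ∀ a : ℝ, -(deriv (deriv (⇑φ)) a) + (a : ℂ) ^ 2 * φ a = lam * φ a) (X Ξ : ℝ) :
    lam * P (T φ χ) X Ξ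
      = -(4⁻¹ * P (d1 (d1 (T φ χ))) X Ξ) - 4⁻¹ * P (mT (mT (T φ χ))) X Ξ
        + Complex.I * X * P (mT (T φ χ)) X Ξ - Complex.I * Ξ * P (d1 (T φ χ)) X Ξ
        + (((X : ℂ)) ^ 2 + ((Ξ : ℂ)) ^ 2) * P (T φ χ) X Ξ := by
  set φ' := SchwartzMap.derivCLM ℝ ℂ φ with hφ'
  set φ'' := SchwartzMap.derivCLM ℝ ℂ φ' with hφ''
  set χ' := SchwartzMap.derivCLM ℝ ℂ χ with hχ'
  set χ'' := SchwartzMap.derivCLM ℝ ℂ χ' with hχ''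
  set Ψ := T φ χ with hΨ
  have E1 : d1 Ψ = T φ' χ + T φ χ' := T_d1 φ χ
  have E2 : d2 Ψ = (2⁻¹ : ℝ) • T φ' χ - (2⁻¹ : ℝ) • T φ χ' := T_d2 φ χ
  have E11 : d1 (d1 Ψ) = (T φ'' χ + T φ' χ') + (T φ' χ' + T φ χ'') := by
    rw [E1, map_add, T_d1, T_d1]
  have E21 : d2 (d1 Ψ) = ((2⁻¹ : ℝ) • T φ'' χ - (2⁻¹ : ℝ) • T φ' χ')
      + ((2⁻¹ : ℝ) • T φ' χ' - (2⁻¹ : ℝ) • T φ χ'') := by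
    rw [E1, map_add, T_d2, T_d2]
  have E22 : d2 (d2 Ψ) = (2⁻¹ : ℝ) • ((2⁻¹ : ℝ) • T φ'' χ - (2⁻¹ : ℝ) • T φ' χ')
      - (2⁻¹ : ℝ) • ((2⁻¹ : ℝ) • T φ' χ' - (2⁻¹ : ℝ) • T φ χ'') := by
    rw [E2, map_sub, _root_.map_smul, _root_.map_smul, T_d2, T_d2]
  have Ekey : T φ'' χ = (4⁻¹ : ℝ) • d1 (d1 Ψ) + d2 (d2 Ψ) + d2 (d1 Ψ) := by
    rw [E11, E21, E22]
    module
  have hc : (⇑φ' : ℝ → ℂ) = deriv (⇑φ) := funext fun a => SchwartzMap.derivCLM_apply ℝ φ a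
  have hφ''val : ∀ a : ℝ, φ'' a = deriv (deriv (⇑φ)) a := by
    intro a
    rw [hφ'', SchwartzMap.derivCLM_apply, hc]
  have Eeig : T φ'' χ = T (mulCoord1 (mulCoord1 φ)) χ - lam • Ψ := by
    apply SchwartzMap.ext
    intro z
    rw [SchwartzMap.sub_apply, SchwartzMap.smul_apply, T_apply, T_apply, hΨ, T_apply]
    rw [hφ''val (Amap z)]
    simp only [mulCoord1_apply, smul_eq_mul]
    linear_combination (-(χ (Bmap z))) * heig (Amap z)
  have hdd : P (T φ'' χ) X Ξ
      = 4⁻¹ * P (d1 (d1 Ψ)) X Ξ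
        + (Complex.I * Ξ) * ((Complex.I * Ξ) * P Ψ X Ξ)
        + (Complex.I * Ξ) * P (d1 Ψ) X Ξ := by
    rw [Ekey, P_add, P_add, P_rsmul, P_d2 (d2 Ψ), P_d2 Ψ, P_d2 (d1 Ψ)]
    push_cast
    ring
  have hmm : P (T (mulCoord1 (mulCoord1 φ)) χ) X Ξ
      = (X : ℂ) ^ 2 * P Ψ X Ξ + ((X : ℂ) * Complex.I) * P (mT Ψ) X Ξ
        - 4⁻¹ * P (mT (mT Ψ)) X Ξ := by
    have i1 : Integrable (fun t : ℝ => (X : ℂ) ^ 2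
        * (Complex.exp (-(Complex.I * Ξ * t)) * Ψ (X, t))) :=
      (integrable_P_integrand Ψ X Ξ).const_mul _
    have i2 : Integrable (fun t : ℝ => ((X : ℂ) * Complex.I)
        * (Complex.exp (-(Complex.I * Ξ * t)) * (mT Ψ) (X, t))) :=
      (integrable_P_integrand (mT Ψ) X Ξ).const_mul _
    have i3 : Integrable (fun t : ℝ => (-(4⁻¹ : ℂ))
        * (Complex.exp (-(Complex.I * Ξ * t)) * (mT (mT Ψ)) (X, t))) :=
      (integrable_P_integrand (mT (mT Ψ)) X Ξ).const_mul _
    have hfun : (fun t : ℝ => Complex.exp (-(Complex.I * Ξ * t))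
        * (T (mulCoord1 (mulCoord1 φ)) χ) (X, t))
        = fun t : ℝ => (X : ℂ) ^ 2 * (Complex.exp (-(Complex.I * Ξ * t)) * Ψ (X, t))
            + ((X : ℂ) * Complex.I) * (Complex.exp (-(Complex.I * Ξ * t)) * (mT Ψ) (X, t))
            + (-(4⁻¹ : ℂ)) * (Complex.exp (-(Complex.I * Ξ * t)) * (mT (mT Ψ)) (X, t)) := by
      funext t
      rw [T_apply]
      simp only [mulCoord1_apply]
      rw [mT_apply (mT Ψ) (X, t), mT_apply Ψ (X, t), hΨ, T_apply]
      have ha : Amap (X, t) = X + t / 2 := by rw [Amap_apply]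
      rw [ha]
      have hI : Complex.I * Complex.I = -1 := Complex.I_mul_I
      push_cast
      linear_combination (((X:ℂ) * t + (t:ℂ)^2/4) * Complex.exp (-(Complex.I * Ξ * t))
        * φ ((X:ℝ) + t/2) * χ (Bmap (X, t))) * hI
    have i12 : Integrable (fun t : ℝ => (X : ℂ) ^ 2
        * (Complex.exp (-(Complex.I * Ξ * t)) * Ψ (X, t))
        + ((X : ℂ) * Complex.I) * (Complex.exp (-(Complex.I * Ξ * t)) * (mT Ψ) (X, t))) :=
      i1.add i2
    rw [P_def, hfun, integral_add i12 i3, integral_add i1 i2,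
      integral_const_mul, integral_const_mul, integral_const_mul,
      ← P_def Ψ X Ξ, ← P_def (mT Ψ) X Ξ, ← P_def (mT (mT Ψ)) X Ξ]
    ring
  have hfin : P (T φ'' χ) X Ξ = P (T (mulCoord1 (mulCoord1 φ)) χ) X Ξ - lam * P Ψ X Ξ := by
    rw [Eeig, P_sub, P_smul]
  have hI : Complex.I * Complex.I = -1 := Complex.I_mul_I
  linear_combination hfin + hmm - hdd + (-(Ξ:ℂ)^2 * P Ψ X Ξ) * hI

lemma deriv_P_half_fst (k : ℂ) (Φ : S2) (b x : ℝ) :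
    deriv (fun u : ℝ => k * P Φ (u / 2) (b / 2)) x = k / 2 * P (d1 Φ) (x / 2) (b / 2) := by
  have h1 : HasDerivAt (fun u : ℝ => u / 2) (2⁻¹ : ℝ) x := by
    simpa using (hasDerivAt_id x).div_const 2
  have h2 : HasDerivAt (fun u : ℝ => P Φ (u / 2) (b / 2))
      ((2⁻¹ : ℝ) • P (d1 Φ) (x / 2) (b / 2)) x :=
    HasDerivAt.scomp (h := fun u : ℝ => u / 2) x (hasDerivAt_P_fst Φ (b / 2) (x / 2)) h1
  have h4 : HasDerivAt (fun u : ℝ => k * P Φ (u / 2) (b / 2))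
      (k * ((2⁻¹ : ℝ) • P (d1 Φ) (x / 2) (b / 2))) x := h2.const_mul k
  rw [h4.deriv, real_smul]
  push_cast
  ring

lemma deriv_P_half_snd (k : ℂ) (Φ : S2) (a y : ℝ) :
    deriv (fun v : ℝ => k * P Φ (a / 2) (v / 2)) y = k / 2 * P (mT Φ) (a / 2) (y / 2) := by
  have h1 : HasDerivAt (fun v : ℝ => v / 2) (2⁻¹ : ℝ) y := by
    simpa using (hasDerivAt_id y).div_const 2
  have h2 : HasDerivAt (fun v : ℝ => P Φ (a / 2) (v / 2))
      ((2⁻¹ : ℝ) • P (mT Φ) (a / 2) (y / 2)) y :=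
    HasDerivAt.scomp (h := fun v : ℝ => v / 2) y (hasDerivAt_P_snd Φ (a / 2) (y / 2)) h1
  have h4 : HasDerivAt (fun v : ℝ => k * P Φ (a / 2) (v / 2))
      (k * ((2⁻¹ : ℝ) • P (mT Φ) (a / 2) (y / 2))) y := h2.const_mul k
  rw [h4.deriv, real_smul]
  push_cast
  ring

lemma pdx_form (k : ℂ) (Φ : S2) :
    pdx (fun a b => k * P Φ (a / 2) (b / 2)) = fun a b => k / 2 * P (d1 Φ) (a / 2) (b / 2) := by
  funext a b
  exact deriv_P_half_fst k Φ b a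

lemma pdy_form (k : ℂ) (Φ : S2) :
    pdy (fun a b => k * P Φ (a / 2) (b / 2)) = fun a b => k / 2 * P (mT Φ) (a / 2) (b / 2) := by
  funext a b
  exact deriv_P_half_snd k Φ a b

end Wig


/-- If `φ ∈ S(ℝ)` is a nonzero eigenfunction of the harmonic
oscillator `H₀` with eigenvalue `λ`, and `θ ∈ S(ℝ)` is nonzero, then
`F(x,y) = W(φ,θ)(x/2, y/2)` belongs to `S(ℝ²)`, is nonzero, and is an eigenfunction
of the Landau Hamiltonian: `H̃_L F = λF`. -/
theorem stmt15 (φ : SchwartzMap ℝ ℂ) (hφ : φ ≠ 0) (lam : ℂ)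
    (heig : ∀ t : ℝ, harmOsc φ t = lam * φ t)
    (θ : SchwartzMap ℝ ℂ) (hθ : θ ≠ 0) :
    (∃ G : SchwartzMap (ℝ × ℝ) ℂ,
      ∀ x y : ℝ, G (x, y) = crossWigner1 φ θ (x / 2) (y / 2)) ∧
    (∃ x y : ℝ, crossWigner1 φ θ (x / 2) (y / 2) ≠ 0) ∧
    (∀ x y : ℝ,
      landauOp (fun a b => crossWigner1 φ θ (a / 2) (b / 2)) x y
        = lam * crossWigner1 φ θ (x / 2) (y / 2)) := by
  classical
  set χ : Wig.S1 := Wig.conjS θ with hχ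
  set Ψ : Wig.S2 := Wig.T φ χ with hΨdef
  have hCW : ∀ X Ξ : ℝ, crossWigner1 (⇑φ) (⇑θ) X Ξ = (((2 * π)⁻¹ : ℝ) : ℂ) * Wig.P Ψ X Ξ := by
    intro X Ξ
    rw [crossWigner1, Wig.P_def]
    congr 1
    refine integral_congr_ae (Filter.Eventually.of_forall fun t => ?_)
    show Complex.exp (-(Complex.I * Ξ * t)) * φ (X + t / 2) * conj (θ (X - t / 2))
        = Complex.exp (-(Complex.I * Ξ * t)) * Ψ (X, t)
    rw [hΨdef, Wig.T_apply]
    have ha : Wig.Amap (X, t) = X + t / 2 := by rw [Wig.Amap_apply]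
    have hb : Wig.Bmap (X, t) = X - t / 2 := by rw [Wig.Bmap_apply]
    rw [ha, hb, hχ, Wig.conjS_apply]
    ring
  have hc0 : (((2 * π)⁻¹ : ℝ) : ℂ) ≠ 0 := by
    have h1 : (0:ℝ) < (2 * π)⁻¹ := by positivity
    exact_mod_cast ne_of_gt h1
  refine ⟨?_, ?_, ?_⟩
  · -- Schwartz G
    set half : (ℝ × ℝ) →L[ℝ] (ℝ × ℝ) := (2⁻¹ : ℝ) • ContinuousLinearMap.id ℝ (ℝ × ℝ) with hhalf
    have hval : ∀ z : ℝ × ℝ, half z = (2⁻¹ : ℝ) • z := fun z => by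
      rw [hhalf]; simp
    have hg : Function.HasTemperateGrowth (⇑half) := half.hasTemperateGrowth
    have hupper : ∃ (kk : ℕ) (C : ℝ), ∀ z : ℝ × ℝ, ‖z‖ ≤ C * (1 + ‖half z‖) ^ kk := by
      refine ⟨1, 2, fun z => ?_⟩
      rw [hval z, norm_smul, pow_one]
      simp only [norm_inv, Real.norm_ofNat]
      nlinarith [norm_nonneg z]
    set G0 := SchwartzMap.compCLM (𝕜 := ℝ) hg hupper (Wig.SchwartzW Ψ) with hG0
    refine ⟨(((2 * π)⁻¹ : ℝ) : ℂ) • G0, fun x y => ?_⟩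
    rw [hCW (x / 2) (y / 2), SchwartzMap.smul_apply, smul_eq_mul]
    congr 1
    have h1 : G0 (x, y) = (Wig.SchwartzW Ψ) (half (x, y)) := rfl
    have h2 : half ((x, y) : ℝ × ℝ) = ((x / 2 : ℝ), (y / 2 : ℝ)) := by
      rw [hval, Prod.smul_mk, smul_eq_mul, smul_eq_mul, Prod.mk.injEq]
      constructor <;> ring
    rw [h1, h2, Wig.SchwartzW_apply]
  · -- nonvanishing
    by_contra hcon
    push_neg at hcon
    have hP0 : ∀ X Ξ : ℝ, Wig.P Ψ X Ξ = 0 := by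
      intro X Ξ
      have h := hcon (2 * X) (2 * Ξ)
      rw [show (2 * X) / 2 = X by ring, show (2 * Ξ) / 2 = Ξ by ring, hCW] at h
      rcases mul_eq_zero.mp h with h' | h'
      · exact absurd h' hc0
      · exact h'
    have hzero := Wig.P_eq_zero_imp Ψ hP0
    have hprod : ∀ a b : ℝ, φ a * conj (θ b) = 0 := by
      intro a b
      have h := hzero (((a + b) / 2, a - b))
      rw [hΨdef, Wig.T_apply] at h
      have ha : Wig.Amap ((a + b) / 2, a - b) = a := by rw [Wig.Amap_apply]; ring
      have hb : Wig.Bmap ((a + b) / 2, a - b) = b := by rw [Wig.Bmap_apply]; ring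
      rw [ha, hb, hχ, Wig.conjS_apply] at h
      exact h
    have hφa : ∃ a : ℝ, φ a ≠ 0 := by
      by_contra hno
      push_neg at hno
      exact hφ (SchwartzMap.ext fun a => by simpa using hno a)
    obtain ⟨a, ha⟩ := hφa
    apply hθ
    apply SchwartzMap.ext
    intro b
    rcases mul_eq_zero.mp (hprod a b) with h' | h'
    · exact absurd h' ha
    · have h2 := congrArg (starRingEnd ℂ) h'
      simpa using h2
  · -- PDE
    intro x y
    have hrep : (fun a b => crossWigner1 (⇑φ) (⇑θ) (a / 2) (b / 2))
        = fun a b => (((2 * π)⁻¹ : ℝ) : ℂ) * Wig.P Ψ (a / 2) (b / 2) :=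
      funext fun a => funext fun b => hCW (a / 2) (b / 2)
    simp only [landauOp]
    rw [hrep, hCW (x / 2) (y / 2)]
    rw [Wig.pdx_form (((2 * π)⁻¹ : ℝ) : ℂ) Ψ, Wig.pdy_form (((2 * π)⁻¹ : ℝ) : ℂ) Ψ,
        Wig.pdx_form ((((2 * π)⁻¹ : ℝ) : ℂ) / 2) (Wig.d1 Ψ),
        Wig.pdy_form ((((2 * π)⁻¹ : ℝ) : ℂ) / 2) (Wig.mT Ψ)]
    have hkey := Wig.key φ χ lam (fun a => by simpa [harmOsc] using heig a) (x / 2) (y / 2)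
    have hcc : (((2 * π)⁻¹ : ℝ) : ℂ) = ((π : ℂ))⁻¹ / 2 := by
      push_cast
      rw [mul_inv]
      ring
    rw [hcc]
    push_cast at hkey ⊢
    linear_combination (-(((π : ℂ))⁻¹ / 2)) * hkey
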